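/- Let X be a topological space, let 𝓑 be a finite family of regular open subsets of X, and let 𝓣 be a tiling of X such that for every x ∈ X the family {B ∈ 𝓑 : x ∈ Fr B} has cardinality at least |𝓣_x| − 1. Fix T ∈ 𝓣 and a finite family 𝓒 = {C_i : i < k} of regular open subsets of X such that T ⊆ ⋃𝓒 and 𝓑 ∩ 𝓒 = ∅; for i < k put R_i = T ∩ (C_i ∖ ⋃_{j<i} cl C_j). Then 𝓢 = (𝓣 ∖ {T}) ∪ {R_i : i < k} is a tiling of X and for every x ∈ X the family {B ∈ 𝓑 ∪ 𝓒 : x ∈ Fr B} has cardinality at least |𝓢_x| − 1. -/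

import Mathlib

/-- A tiling of a space is a finite pairwise disjoint family of regular open sets whose
closures cover the space. -/
def IsTiling {X : Type*} [TopologicalSpace X] (𝒯 : Set (Set X)) : Prop :=
  𝒯.Finite ∧ (∀ T ∈ 𝒯, T = interior (closure T)) ∧
    𝒯.Pairwise Disjoint ∧ (⋃ T ∈ 𝒯, closure T) = Set.univ

lemma regOpen_inter {X : Type*} [TopologicalSpace X] {s t : Set X}
    (hs : s = interior (closure s)) (ht : t = interior (closure t)) :
    s ∩ t = interior (closure (s ∩ t)) := by
  have hso : IsOpen s := hs ▸ isOpen_interior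
  have hto : IsOpen t := ht ▸ isOpen_interior
  apply subset_antisymm
  · exact interior_maximal subset_closure (hso.inter hto)
  · have h1 : interior (closure (s ∩ t)) ⊆ interior (closure s) :=
      interior_mono (closure_mono Set.inter_subset_left)
    have h2 : interior (closure (s ∩ t)) ⊆ interior (closure t) :=
      interior_mono (closure_mono Set.inter_subset_right)
    exact Set.subset_inter (h1.trans hs.ge) (h2.trans ht.ge)

lemma regOpen_compl_closure {X : Type*} [TopologicalSpace X] {U : Set X}
    (hU : IsOpen U) : (closure U)ᶜ = interior (closure ((closure U)ᶜ)) := by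
  have key : closure (interior (closure U)) = closure U :=
    subset_antisymm (closure_minimal interior_subset isClosed_closure)
      (closure_mono (interior_maximal subset_closure hU))
  rw [closure_compl, interior_compl, key]

set_option maxHeartbeats 1000000 in
/-- Lemma 2 of the paper: refining one tile of a tiling keeps the counting property with
respect to frontiers of the auxiliary regular open sets. -/
theorem statement4 {X : Type*} [TopologicalSpace X]
    (ℬ : Set (Set X)) (hℬfin : ℬ.Finite) (hℬ : ∀ B ∈ ℬ, B = interior (closure B))
    (𝒯 : Set (Set X)) (h𝒯 : IsTiling 𝒯)
    (hcard : ∀ x : X,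
      {T ∈ 𝒯 | x ∈ closure T}.ncard - 1 ≤ {B ∈ ℬ | x ∈ frontier B}.ncard)
    (T : Set X) (hT : T ∈ 𝒯)
    (k : ℕ) (C : Fin k → Set X) (hCreg : ∀ i, C i = interior (closure (C i)))
    (hTC : T ⊆ ⋃ i, C i)
    (hsep : ℬ ∩ Set.range C = ∅)
    (R : Fin k → Set X)
    (hR : ∀ i, R i = T ∩ (C i \ ⋃ j < i, closure (C j))) :
    IsTiling ((𝒯 \ {T}) ∪ Set.range R) ∧
      ∀ x : X,
        {S ∈ (𝒯 \ {T}) ∪ Set.range R | x ∈ closure S}.ncard - 1 ≤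
          {B ∈ ℬ ∪ Set.range C | x ∈ frontier B}.ncard := by
  obtain ⟨hfin, hreg, hpw, hcov⟩ := h𝒯
  have hCopen : ∀ i, IsOpen (C i) := fun i => (hCreg i) ▸ isOpen_interior
  have hTreg : T = interior (closure T) := hreg T hT
  have hTopen : IsOpen T := hTreg ▸ isOpen_interior
  have hUcl : ∀ i : Fin k, (⋃ j < i, closure (C j)) = closure (⋃ j < i, C j) :=
    fun i => ((Set.toFinite _).closure_biUnion _).symm
  have hRreg : ∀ i, R i = interior (closure (R i)) := by
    intro i
    rw [hR i, Set.diff_eq, hUcl i]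
    exact regOpen_inter hTreg
      (regOpen_inter (hCreg i)
        (regOpen_compl_closure (isOpen_biUnion fun j _ => hCopen j)))
  have hRsubT : ∀ i, R i ⊆ T := fun i => (hR i) ▸ Set.inter_subset_left
  have hRsubC : ∀ i, R i ⊆ C i := fun i => (hR i) ▸
    (Set.inter_subset_right.trans Set.diff_subset)
  have hRj : ∀ i j : Fin k, i < j → R j ⊆ (closure (C i))ᶜ := by
    intro i j hij x hx
    rw [hR j] at hx
    exact fun h => hx.2.2 (Set.mem_iUnion₂.mpr ⟨i, hij, h⟩)
  -- if two C's coincide the later R is empty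
  have hCne : ∀ i j : Fin k, i < j → C i = C j → R j = ∅ := by
    intro i j hij hCC
    apply Set.eq_empty_iff_forall_notMem.mpr
    intro y hy
    exact (hRj i j hij hy) (subset_closure (hCC ▸ hRsubC j hy))
  -- T is covered by the closures of the R i
  have hTsub : T ⊆ ⋃ i, closure (R i) := by
    intro x hx
    have hx' : x ∈ ⋃ i, C i := hTC hx
    obtain ⟨i0, hi0⟩ := Set.mem_iUnion.mp hx'
    have hne : ({i : Fin k | x ∈ closure (C i)}).Nonempty := ⟨i0, subset_closure hi0⟩
    obtain ⟨i, hi, hmin⟩ :=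
      Set.exists_min_image {i : Fin k | x ∈ closure (C i)} id (Set.toFinite _) hne
    have hxV : x ∉ ⋃ j < i, closure (C j) := by
      intro h
      obtain ⟨j, hji, hj⟩ := Set.mem_iUnion₂.mp h
      exact absurd (hmin j hj) (not_le.mpr hji)
    have hVopen : IsOpen ((⋃ j < i, closure (C j))ᶜ) := by
      rw [hUcl i]; exact isClosed_closure.isOpen_compl
    have hmem : x ∈ (T ∩ (⋃ j < i, closure (C j))ᶜ) ∩ closure (C i) := ⟨⟨hx, hxV⟩, hi⟩
    have hsub : (T ∩ (⋃ j < i, closure (C j))ᶜ) ∩ C i ⊆ R i := by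
      rw [hR i]
      rintro y ⟨⟨hyT, hyV⟩, hyC⟩
      exact ⟨hyT, hyC, hyV⟩
    have := (hTopen.inter hVopen).inter_closure hmem
    exact Set.mem_iUnion.mpr ⟨i, closure_mono hsub this⟩
  constructor
  · refine ⟨hfin.diff.union (Set.finite_range R), ?_, ?_, ?_⟩
    · rintro S (hS | ⟨i, rfl⟩)
      · exact hreg S hS.1
      · exact hRreg i
    · rintro a (ha | ⟨i, rfl⟩) b (hb | ⟨j, rfl⟩) hab
      · exact hpw ha.1 hb.1 hab
      · exact (hpw ha.1 hT (fun h => ha.2 (h ▸ rfl))).mono_right (hRsubT j)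
      · exact ((hpw hb.1 hT (fun h => hb.2 (h ▸ rfl))).mono_right (hRsubT i)).symm
      · rcases lt_trichotomy i j with hij | hij | hij
        · exact Set.disjoint_left.mpr fun y hyi hyj =>
            (hRj i j hij hyj) (subset_closure (hRsubC i hyi))
        · exact absurd (congrArg R hij) hab
        · exact (Set.disjoint_left.mpr fun y hyj hyi =>
            (hRj j i hij hyi) (subset_closure (hRsubC j hyj))).symm
    · apply Set.eq_univ_of_univ_subset
      intro x _
      have : x ∈ ⋃ S ∈ 𝒯, closure S := hcov ▸ Set.mem_univ x
      obtain ⟨S, hS, hxS⟩ := Set.mem_iUnion₂.mp this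
      by_cases hST : S = T
      · subst hST
        have hcl : closure S ⊆ ⋃ i, closure (R i) := by
          have hclosed : IsClosed (⋃ i, closure (R i)) :=
            isClosed_iUnion_of_finite fun i => isClosed_closure
        -- closure S ⊆ closure (⋃ i, closure (R i)) = ⋃ ...
          calc closure S ⊆ closure (⋃ i, closure (R i)) := closure_mono hTsub
            _ = ⋃ i, closure (R i) := hclosed.closure_eq
        obtain ⟨i, hxi⟩ := Set.mem_iUnion.mp (hcl hxS)
        refine Set.mem_iUnion₂.mpr ⟨R i, Or.inr ⟨i, rfl⟩, ?_⟩
        simpa using hxi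
      · exact Set.mem_iUnion₂.mpr ⟨S, Or.inl ⟨hS, hST⟩, hxS⟩
  · intro x
    set Tx : Set (Set X) := {S ∈ 𝒯 | x ∈ closure S} with hTxdef
    set A : Set (Set X) := {S ∈ 𝒯 \ {T} | x ∈ closure S} with hAdef
    set Rs : Set (Set X) := {S ∈ Set.range R | x ∈ closure S} with hRsdef
    set Bf : Set (Set X) := {B ∈ ℬ | x ∈ frontier B} with hBfdef
    set Cf : Set (Set X) := {B ∈ Set.range C | x ∈ frontier B} with hCfdef
    have hsplitS : {S ∈ (𝒯 \ {T}) ∪ Set.range R | x ∈ closure S} = A ∪ Rs :=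
      Set.sep_union
    have hsplitB : {B ∈ ℬ ∪ Set.range C | x ∈ frontier B} = Bf ∪ Cf :=
      Set.sep_union
    have hTxfin : Tx.Finite := hfin.subset (Set.sep_subset _ _)
    have hAfin : A.Finite := hfin.diff.subset (Set.sep_subset _ _)
    have hRsfin : Rs.Finite := (Set.finite_range R).subset (Set.sep_subset _ _)
    have hBffin : Bf.Finite := hℬfin.subset (Set.sep_subset _ _)
    have hCffin : Cf.Finite := (Set.finite_range C).subset (Set.sep_subset _ _)
    have hBCdisj : Disjoint Bf Cf := by
      have : Disjoint ℬ (Set.range C) := Set.disjoint_iff_inter_eq_empty.mpr hsep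
      exact this.mono (Set.sep_subset _ _) (Set.sep_subset _ _)
    have hBCcard : (Bf ∪ Cf).ncard = Bf.ncard + Cf.ncard :=
      Set.ncard_union_eq hBCdisj hBffin hCffin
    rw [hsplitS, hsplitB, hBCcard]
    rcases Set.eq_empty_or_nonempty Rs with hRe | hRe
    · rw [hRe, Set.union_empty]
      have hATx : A ⊆ Tx := fun S hS => ⟨hS.1.1, hS.2⟩
      have h1 : A.ncard ≤ Tx.ncard := Set.ncard_le_ncard hATx hTxfin
      have h2 : Tx.ncard - 1 ≤ Bf.ncard := hcard x
      omega
    · set I : Set (Fin k) := {i | x ∈ closure (R i)} with hIdef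
      have hRsI : Rs = R '' I := by
        ext S
        simp only [hRsdef, hIdef, Set.mem_image, Set.mem_setOf_eq, Set.mem_sep_iff,
          Set.mem_range]
        constructor
        · rintro ⟨⟨i, rfl⟩, hx⟩; exact ⟨i, hx, rfl⟩
        · rintro ⟨i, hxi, rfl⟩; exact ⟨⟨i, rfl⟩, hxi⟩
      have hIne : I.Nonempty := by
        obtain ⟨S, hS⟩ := hRe
        rw [hRsI] at hS
        obtain ⟨i, hi, _⟩ := hS
        exact ⟨i, hi⟩
      obtain ⟨M, hMI, hMmax⟩ := Set.exists_max_image I id (Set.toFinite I) hIne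
      have hxT : x ∈ closure T := closure_mono (hRsubT M) hMI
      -- frontier membership for non-maximal indices
      have hfr : ∀ i ∈ I, i ≠ M → x ∈ frontier (C i) := by
        intro i hi hne
        have hiM : i < M := lt_of_le_of_ne (hMmax i hi) hne
        have h1 : x ∈ closure (C i) := closure_mono (hRsubC i) hi
        have h2 : x ∉ C i := by
          have h3 : x ∈ closure ((closure (C i))ᶜ) := closure_mono (hRj i M hiM) hMI
          rw [closure_compl] at h3
          rw [hCreg i]
          exact h3
        exact ⟨h1, by rwa [(hCopen i).interior_eq]⟩
      have hmaps : ∀ i ∈ I \ {M}, C i ∈ Cf := by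
        intro i hi
        exact ⟨⟨i, rfl⟩, hfr i hi.1 hi.2⟩
      have hinj : Set.InjOn C (I \ {M}) := by
        intro i hi j hj hCC
        by_contra hne
        rcases lt_or_gt_of_ne hne with hij | hij
        · have : R j = ∅ := hCne i j hij hCC
          have := hj.1
          rw [hIdef, Set.mem_setOf_eq, ‹R j = ∅›, closure_empty] at this
          exact this
        · have : R i = ∅ := hCne j i hij hCC.symm
          have := hi.1
          rw [hIdef, Set.mem_setOf_eq, ‹R i = ∅›, closure_empty] at this
          exact this
      have hIM : (I \ {M}).ncard ≤ Cf.ncard :=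
        Set.ncard_le_ncard_of_injOn C hmaps hinj hCffin
      have hIMcard : (I \ {M}).ncard = I.ncard - 1 :=
        Set.ncard_diff_singleton_of_mem hMI
      have hm1 : 1 ≤ Rs.ncard := (Set.ncard_pos hRsfin).mpr hRe
      have hmI : Rs.ncard ≤ I.ncard := by
        rw [hRsI]; exact Set.ncard_image_le (Set.toFinite I)
      have hA : A = Tx \ {T} := by
        ext S
        constructor
        · rintro ⟨⟨h1, h2⟩, h3⟩; exact ⟨⟨h1, h3⟩, h2⟩
        · rintro ⟨⟨h1, h3⟩, h2⟩; exact ⟨⟨h1, h2⟩, h3⟩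
      have hAcard : A.ncard = Tx.ncard - 1 := by
        rw [hA]; exact Set.ncard_diff_singleton_of_mem (⟨hT, hxT⟩ : T ∈ Tx)
      have hTI : 1 ≤ Tx.ncard := (Set.ncard_pos hTxfin).mpr ⟨T, hT, hxT⟩
      have hunion : (A ∪ Rs).ncard ≤ A.ncard + Rs.ncard := Set.ncard_union_le A Rs
      have hTB : Tx.ncard - 1 ≤ Bf.ncard := hcard x
      omega
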